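/- If a discriminatory equilibrium and a uniform advertising equilibrium A coexist at the same q ∈ (1/2, 1], then every consumer, regardless of value v, weakly prefers the uniform equilibrium A (strictly if she purchases), while the seller strictly prefers the discriminatory equilibrium: the seller's profit p₁(q)(1-F(v*(q))) exceeds p_M(1-F(p_M)). -/
import Mathlib


/-- If a discriminatory equilibrium (price `p₁`, cutoff `v* = p₁ + (1-2q)δ < p_M`)
and a uniform advertising equilibrium A (price `p_M < p₁`) coexist at the same
`q ∈ (1/2,1]`, then every consumer weakly prefers the uniform equilibrium A
(strictly if she purchases, i.e. `v ≥ v*`), while the seller strictly prefers the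
discriminatory equilibrium: `p_M(1 - F(p_M)) < p₁(1 - F(v*))`. -/
theorem coexist_A_preferences (δ q pM p₁ vs : ℝ) (F : ℝ → ℝ)
    (hδ : 0 < δ) (hq : q ∈ Set.Ioc (1/2 : ℝ) 1)
    (hvs : vs = p₁ + (1 - 2*q) * δ)
    (hlt : vs < pM) (hgt : pM < p₁) (hpM : 0 < pM)
    (hF : Monotone F) (hF1 : F pM < 1) :
    (∀ v : ℝ,
      (if vs ≤ v then v - p₁ + q * δ else (1 - q) * δ) ≤ max (v - pM) 0 + δ) ∧
    (∀ v : ℝ, vs ≤ v → (v - p₁ + q * δ) < max (v - pM) 0 + δ) ∧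
    pM * (1 - F pM) < p₁ * (1 - F vs) := by
  obtain ⟨hq1, hq2⟩ := hq
  have key : ∀ v : ℝ, vs ≤ v → (v - p₁ + q * δ) < max (v - pM) 0 + δ := by
    intro v _
    have h1 : v - pM ≤ max (v - pM) 0 := le_max_left _ _
    nlinarith
  refine ⟨?_, key, ?_⟩
  · intro v
    by_cases h : vs ≤ v
    · simp only [h, if_true]; exact (key v h).le
    · simp only [h, if_false]
      have : (0:ℝ) ≤ max (v - pM) 0 := le_max_right _ _
      nlinarith
  · have hFvs : F vs ≤ F pM := hF hlt.le
    nlinarith
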